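/- Let C be a cycle in a graph G and let h ∈ V(G)\V(C). Call a vertex v ∈ V(C) a 101-neighbor of h if v is not adjacent to h but both neighbors of v on C are adjacent to h. If two 101-neighbors v1, v2 of h are joined by an edge of G, then G contains a cycle on vertex set V(C) ∪ {h}, i.e., a cycle of length |V(C)| + 1. -/

import Mathlib

open SimpleGraph

/-- `v` is a 101-neighbor of `h` with respect to a cycle `c`: `v` lies on `c`, is not
adjacent to `h`, but every neighbor of `v` along the cycle is adjacent to `h`. -/
def Is101Neighbor {V : Type*} (G : SimpleGraph V) {r : V} (c : G.Walk r r)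
    (h v : V) : Prop :=
  v ∈ c.support ∧ ¬ G.Adj h v ∧ ∀ u, s(u, v) ∈ c.edges → G.Adj h u

private lemma closed_mem_support_iff_tail {V : Type*} {G : SimpleGraph V} {u x : V}
    (p : G.Walk u u) (hp : ¬ p.Nil) : x ∈ p.support ↔ x ∈ p.support.tail := by
  rw [SimpleGraph.Walk.not_nil_iff] at hp
  obtain ⟨y, ha, q, rfl⟩ := hp
  simp only [SimpleGraph.Walk.support_cons, List.tail_cons, List.mem_cons]
  constructor
  · rintro (rfl | hx)
    · exact q.end_mem_support
    · exact hx
  · exact Or.inr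

/-- Let `C` be a cycle (with at least 6 vertices) in `G` and `h ∉ V(C)`. If two
101-neighbors `v₁, v₂` of `h` are joined by an edge of `G`, then `G` contains a cycle
on the vertex set `V(C) ∪ {h}`, i.e. of length `|V(C)| + 1`. -/
theorem stmt_18 {V : Type*} (G : SimpleGraph V) (r : V) (c : G.Walk r r)
    (hc : c.IsCycle) (hlen : 6 ≤ c.length) (h : V) (hhC : h ∉ c.support)
    (v₁ v₂ : V) (h1 : Is101Neighbor G c h v₁) (h2 : Is101Neighbor G c h v₂)
    (h12 : v₁ ≠ v₂) (hadj : G.Adj v₁ v₂) :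
    ∃ (w : V) (c' : G.Walk w w), c'.IsCycle ∧ c'.length = c.length + 1 ∧
      {x | x ∈ c'.support} = insert h {x | x ∈ c.support} := by
  classical
  obtain ⟨hv1C, hnh1, hn1⟩ := h1
  obtain ⟨hv2C, hnh2, hn2⟩ := h2
  set d : G.Walk v₁ v₁ := c.rotate v₁ hv1C with hd
  have hdc : d.IsCycle := hc.rotate hv1C
  have hcnil : ¬ c.Nil := by
    rw [SimpleGraph.Walk.not_nil_iff_lt_length]; omega
  have hlen_d : d.length = c.length := by
    have := congrArg SimpleGraph.Walk.length (c.take_spec hv1C)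
    rw [SimpleGraph.Walk.length_append] at this
    rw [hd, SimpleGraph.Walk.rotate, SimpleGraph.Walk.length_append]; omega
  have hdnil : ¬ d.Nil := by
    rw [SimpleGraph.Walk.not_nil_iff_lt_length]; omega
  have hedges : ∀ e, e ∈ d.edges ↔ e ∈ c.edges :=
    fun e => (c.rotate_edges v₁ hv1C).perm.mem_iff
  have hsupp : ∀ x, x ∈ d.support ↔ x ∈ c.support := by
    intro x
    rw [closed_mem_support_iff_tail d hdnil, closed_mem_support_iff_tail c hcnil]
    exact (c.support_rotate v₁ hv1C).perm.mem_iff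
  have hv2d : v₂ ∈ d.support := (hsupp v₂).mpr hv2C
  set P : G.Walk v₁ v₂ := d.takeUntil v₂ hv2d with hP
  set Q : G.Walk v₂ v₁ := d.dropUntil v₂ hv2d with hQ
  have hPQ : P.append Q = d := d.take_spec hv2d
  have hPnil : ¬ P.Nil := SimpleGraph.Walk.not_nil_of_ne h12
  have hQnil : ¬ Q.Nil := SimpleGraph.Walk.not_nil_of_ne h12.symm
  rw [SimpleGraph.Walk.not_nil_iff] at hPnil hQnil
  obtain ⟨x1, ax, P₁, hP1⟩ := hPnil
  obtain ⟨y1, ay, Q₁, hQ1⟩ := hQnil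
  -- structure of support and edges of d
  have hds : d.support = v₁ :: (P₁.support ++ Q₁.support) := by
    rw [← hPQ, hP1, hQ1]
    simp [SimpleGraph.Walk.support_append]
  have hde : d.edges = s(v₁, x1) :: (P₁.edges ++ s(v₂, y1) :: Q₁.edges) := by
    rw [← hPQ, hP1, hQ1]
    simp [SimpleGraph.Walk.edges_append]
  -- h is outside everything
  have hhd : h ∉ d.support := fun hx => hhC ((hsupp h).mp hx)
  have hhv1 : h ≠ v₁ := fun e => hhC (e ▸ hv1C)
  have hhv2 : h ≠ v₂ := fun e => hhC (e ▸ hv2C)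
  have hhP1 : h ∉ P₁.support := by
    intro hx; apply hhd; rw [hds]; simp [hx]
  have hhQ1 : h ∉ Q₁.support := by
    intro hx; apply hhd; rw [hds]; simp [hx]
  -- adjacencies of h
  have hax1 : G.Adj h x1 := by
    apply hn1 x1
    rw [Sym2.eq_swap]
    apply (hedges _).mp
    rw [hde]; simp
  have hay1 : G.Adj h y1 := by
    apply hn2 y1
    rw [Sym2.eq_swap]
    apply (hedges _).mp
    rw [hde]; simp
  have hnv12 : s(v₁, v₂) ∉ d.edges := by
    intro he
    exact hnh1 (hn2 v₁ ((hedges _).mp he))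
  -- nodup facts
  have hnds : (P₁.support ++ Q₁.support).Nodup := by
    have := hdc.support_nodup
    rw [hds] at this
    simpa using this
  have hnde := hdc.edges_nodup
  rw [hde] at hnde
  have hx1y1 : x1 ≠ y1 := by
    have hdisj := (List.nodup_append.mp hnds).2.2
    intro e
    exact hdisj _ P₁.start_mem_support _ Q₁.start_mem_support e
  -- edge subsets
  have hsubP : P₁.edges ⊆ d.edges := by
    intro e he; rw [hde]; simp [he]
  have hsubQ : Q₁.edges ⊆ d.edges := by
    intro e he; rw [hde]; simp [he]
  have hhP1e : ∀ e ∈ P₁.edges, h ∉ e := by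
    rintro e he hm
    induction e using Sym2.inductionOn with
    | hf z w =>
      rcases Sym2.mem_iff.mp hm with rfl | rfl
      · exact hhP1 (P₁.fst_mem_support_of_mem_edges he)
      · exact hhP1 (P₁.snd_mem_support_of_mem_edges he)
  have hhQ1e : ∀ e ∈ Q₁.edges, h ∉ e := by
    rintro e he hm
    induction e using Sym2.inductionOn with
    | hf z w =>
      rcases Sym2.mem_iff.mp hm with rfl | rfl
      · exact hhQ1 (Q₁.fst_mem_support_of_mem_edges he)
      · exact hhQ1 (Q₁.snd_mem_support_of_mem_edges he)
  -- the new cycle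
  let w3 : G.Walk v₁ h := Q₁.reverse.append (SimpleGraph.Walk.cons hay1.symm SimpleGraph.Walk.nil)
  let w2 : G.Walk v₂ h := SimpleGraph.Walk.cons hadj.symm w3
  let e : G.Walk h h := SimpleGraph.Walk.cons hax1 (P₁.append w2)
  have hes : e.support = h :: (P₁.support ++ (Q₁.support.reverse ++ [h])) := by
    simp [e, w2, w3, SimpleGraph.Walk.support_append, SimpleGraph.Walk.support_reverse]
  have hee : e.edges
      = s(h, x1) :: (P₁.edges ++ (s(v₂, v₁) :: (Q₁.edges.reverse ++ [s(y1, h)]))) := by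
    simp [e, w2, w3, SimpleGraph.Walk.edges_append, SimpleGraph.Walk.edges_reverse]
  refine ⟨h, e, ⟨⟨⟨?_⟩, ?_⟩, ?_⟩, ?_, ?_⟩
  · -- edges nodup
    have hhy1 : h ≠ y1 := fun e => hhQ1 (e ▸ Q₁.start_mem_support)
    have hsv21P : s(v₂, v₁) ∉ P₁.edges := fun he => hnv12 (by
      have := hsubP he; rwa [Sym2.eq_swap] at this)
    have hsv21Q : s(v₂, v₁) ∉ Q₁.edges := fun he => hnv12 (by
      have := hsubQ he; rwa [Sym2.eq_swap] at this)
    rw [List.nodup_cons, List.nodup_append, List.nodup_cons] at hnde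
    obtain ⟨hne1, hndP, ⟨hne2, hndQ⟩, hdisjPQ⟩ := hnde
    have hhx1 : h ≠ x1 := hax1.ne
    rw [hee, List.nodup_cons, List.nodup_append, List.nodup_cons, List.nodup_append,
      List.nodup_reverse]
    refine ⟨?_, hndP, ⟨?_, hndQ, List.nodup_singleton _, ?_⟩, ?_⟩
    · intro hm
      rcases List.mem_append.mp hm with hm | hm
      · exact hhP1e _ hm (by simp)
      · rcases List.mem_cons.mp hm with hm | hm
        · rw [Sym2.eq_iff] at hm
          rcases hm with ⟨rfl, -⟩ | ⟨rfl, -⟩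
          · exact hhv2 rfl
          · exact hhv1 rfl
        · rcases List.mem_append.mp hm with hm | hm
          · exact hhQ1e _ (List.mem_reverse.mp hm) (by simp)
          · rw [List.mem_singleton, Sym2.eq_iff] at hm
            rcases hm with ⟨rfl, -⟩ | ⟨-, rfl⟩
            · exact hhy1 rfl
            · exact hx1y1 rfl
    · intro hm
      rcases List.mem_append.mp hm with hm | hm
      · exact hsv21Q (List.mem_reverse.mp hm)
      · rw [List.mem_singleton, Sym2.eq_iff] at hm
        rcases hm with ⟨-, rfl⟩ | ⟨rfl, -⟩
        · exact hhv1 rfl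
        · exact hhv2 rfl
    · intro a ha b hb hab; subst hab
      rw [List.mem_singleton] at hb
      subst hb
      exact hhQ1e _ (List.mem_reverse.mp ha) (by simp)
    · intro a ha b hb hab; subst hab
      rcases List.mem_cons.mp hb with rfl | hb
      · exact hsv21P ha
      · rcases List.mem_append.mp hb with hb | hb
        · exact hdisjPQ _ ha _ (List.mem_cons.mpr (Or.inr (List.mem_reverse.mp hb))) rfl
        · rw [List.mem_singleton] at hb
          subst hb
          exact hhP1e _ ha (by simp)
  · -- ne nil
    simp [e]
  · -- support tail nodup
    rw [hes, List.tail_cons, List.nodup_append, List.nodup_append, List.nodup_reverse]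
    obtain ⟨hndP1, hndQ1, hdisj1⟩ := List.nodup_append.mp hnds
    refine ⟨hndP1, ⟨hndQ1, List.nodup_singleton _, ?_⟩, ?_⟩
    · intro a ha b hb hab; subst hab
      rw [List.mem_singleton] at hb
      subst hb
      exact hhQ1 (List.mem_reverse.mp ha)
    · intro a ha b hb hab; subst hab
      rcases List.mem_append.mp hb with hb | hb
      · exact hdisj1 _ ha _ (List.mem_reverse.mp hb) rfl
      · rw [List.mem_singleton] at hb
        subst hb
        exact hhP1 ha
  · -- length
    have hl : P₁.length + 1 + (Q₁.length + 1) = d.length := by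
      rw [← hPQ, hP1, hQ1]
      simp [SimpleGraph.Walk.length_append]
      omega
    have hl2 : e.length = P₁.length + Q₁.length + 3 := by
      simp [e, w2, w3, SimpleGraph.Walk.length_append]
      omega
    omega
  · -- support set
    ext x
    simp only [Set.mem_setOf_eq, Set.mem_insert_iff]
    rw [← hsupp x, hes, hds]
    have hv1Q : v₁ ∈ Q₁.support := Q₁.end_mem_support
    simp only [List.mem_cons, List.mem_append, List.mem_reverse, List.mem_singleton,
      List.not_mem_nil, or_false]
    constructor
    · rintro (rfl | hx | hx | rfl) <;> tauto
    · rintro (rfl | rfl | hx | hx) <;> tauto
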